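/- Let f : ℕ → ℂ be a function and M ∈ ℕ such that f(d₁d₂) = f(d₁)f(d₂) whenever gcd(M·d₁, d₂) = 1, and suppose the series ∑_{d≥1} μ(d) f(d) converges absolutely. Then ∑_{d=1}^∞ μ(d) f(d) = (∑_{d₁ ∣ M} μ(d₁) f(d₁)) · ∏_{ℓ prime, ℓ ∤ M} (1 − f(ℓ)). -/
import Mathlib

open scoped ArithmeticFunction LSeries.notation

private lemma term_at_zero' (f : ℕ → ℂ) (h0 : f 0 = 0) : LSeries.term f 0 = f := by
  funext n
  rcases eq_or_ne n 0 with rfl | h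
  · simp [LSeries.term, h0]
  · rw [LSeries.term_of_ne_zero h, Complex.cpow_zero, div_one]

private lemma LSeries_at_zero' (f : ℕ → ℂ) (h0 : f 0 = 0) : LSeries f 0 = ∑' n, f n := by
  unfold LSeries
  rw [term_at_zero' f h0]

theorem stmt_2 (f : ℕ → ℂ) (M : ℕ) (hM : M ≠ 0)
    (hmul : ∀ d₁ d₂ : ℕ, Nat.gcd (M * d₁) d₂ = 1 → f (d₁ * d₂) = f d₁ * f d₂)
    (habs : Summable fun d : ℕ => ‖((ArithmeticFunction.moebius d : ℤ) : ℂ) * f d‖) :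
    ∑' d : ℕ, ((ArithmeticFunction.moebius d : ℤ) : ℂ) * f d =
      (∑ d₁ ∈ M.divisors, ((ArithmeticFunction.moebius d₁ : ℤ) : ℂ) * f d₁) *
        ∏' ℓ : {p : ℕ // p.Prime ∧ ¬ p ∣ M}, (1 - f ℓ) := by
  classical
  set μf : ℕ → ℂ := fun n => ((ArithmeticFunction.moebius n : ℤ) : ℂ) * f n with hμf
  have hf1 : f 1 = f 1 * f 1 := by
    have := hmul 1 1 (by simp)
    simpa using this
  by_cases h1 : f 1 = 0
  · have hf0 : ∀ d, f d = 0 := by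
      intro d
      have := hmul d 1 (by simp)
      simpa [h1] using this
    simp [hμf, hf0]
  have hf1' : f 1 = 1 := by
    have h2 : f 1 * 1 = f 1 * f 1 := by rw [mul_one]; exact hf1
    exact (mul_left_cancel₀ h1 h2).symm
  set F : ℕ → ℂ := fun n => if n.primeFactors ⊆ M.primeFactors then μf n else 0 with hFdef
  set G : ℕ → ℂ := fun n => if Nat.Coprime n M then μf n else 0 with hGdef
  have hμf0 : μf 0 = 0 := by simp [hμf]
  have hF0 : F 0 = 0 := by simp [hFdef, hμf0]
  have hG0 : G 0 = 0 := by simp [hGdef, hμf0]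
  have hG1 : G 1 = 1 := by simp [hGdef, hμf, Nat.coprime_one_left, hf1']
  have hFle : ∀ n, ‖F n‖ ≤ ‖μf n‖ := by
    intro n
    simp only [hFdef]
    split <;> simp
  have hGle : ∀ n, ‖G n‖ ≤ ‖μf n‖ := by
    intro n
    simp only [hGdef]
    split <;> simp
  have hFsum : Summable fun n => ‖F n‖ :=
    Summable.of_nonneg_of_le (fun n => norm_nonneg _) hFle habs
  have hGsum : Summable fun n => ‖G n‖ :=
    Summable.of_nonneg_of_le (fun n => norm_nonneg _) hGle habs
  -- multiplicativity of G
  have hGmul : ∀ {m n : ℕ}, Nat.Coprime m n → G (m * n) = G m * G n := by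
    intro m n hco
    by_cases hm : Nat.Coprime m M
    · by_cases hn : Nat.Coprime n M
      · have hmn : Nat.Coprime (m * n) M := Nat.Coprime.mul hm hn
        have hμ : (ArithmeticFunction.moebius (m * n) : ℤ) =
            ArithmeticFunction.moebius m * ArithmeticFunction.moebius n :=
          ArithmeticFunction.isMultiplicative_moebius.map_mul_of_coprime hco
        have hfmn : f (m * n) = f m * f n := hmul m n (Nat.Coprime.mul hn.symm hco)
        simp only [hGdef, if_pos hmn, if_pos hm, if_pos hn, hμf]
        rw [hμ, hfmn]; push_cast; ring
      · have hmn : ¬ Nat.Coprime (m * n) M := fun h =>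
          hn (Nat.Coprime.coprime_dvd_left (dvd_mul_left n m) h)
        simp [hGdef, if_neg hmn, if_neg hn]
    · have hmn : ¬ Nat.Coprime (m * n) M := fun h =>
        hm (Nat.Coprime.coprime_dvd_left (dvd_mul_right m n) h)
      simp [hGdef, if_neg hmn, if_neg hm]
  have hEuler : ∏' p : Nat.Primes, ∑' e : ℕ, G ((p : ℕ) ^ e) = ∑' n, G n :=
    EulerProduct.eulerProduct_tprod hG1 hGmul hGsum hG0
  -- local factors
  have hfactor : ∀ p : Nat.Primes, ∑' e : ℕ, G ((p : ℕ) ^ e) =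
      if (p : ℕ) ∣ M then 1 else 1 - f p := by
    intro p
    have hp := p.prop
    have h2 : ∀ e ∉ ({0, 1} : Finset ℕ), G ((p : ℕ) ^ e) = 0 := by
      intro e he
      simp only [Finset.mem_insert, Finset.mem_singleton] at he
      push_neg at he
      have hμ0 : ArithmeticFunction.moebius ((p : ℕ) ^ e) = 0 := by
        rw [ArithmeticFunction.moebius_apply_prime_pow hp he.1]
        simp [he.2]
      simp [hGdef, hμf, hμ0]
    rw [tsum_eq_sum h2]
    rw [Finset.sum_insert (by simp), Finset.sum_singleton, pow_zero, pow_one, hG1]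
    by_cases hpM : (p : ℕ) ∣ M
    · have : ¬ Nat.Coprime (p : ℕ) M := by
        rw [Nat.Prime.coprime_iff_not_dvd hp]; exact fun h => h hpM
      rw [if_pos hpM]
      simp [hGdef, if_neg this]
    · have hcop : Nat.Coprime (p : ℕ) M := (Nat.Prime.coprime_iff_not_dvd hp).mpr hpM
      rw [if_neg hpM]
      simp only [hGdef, if_pos hcop, hμf, ArithmeticFunction.moebius_apply_prime hp]
      push_cast; ring
  -- rewrite product over primes not dividing M
  have hinj : Function.Injective
      (fun q : {p : ℕ // p.Prime ∧ ¬ p ∣ M} => (⟨q.1, q.2.1⟩ : Nat.Primes)) := by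
    intro a b h
    simp only [Subtype.mk.injEq] at h
    exact Subtype.ext h
  have hprod : ∏' p : Nat.Primes, (if (p : ℕ) ∣ M then 1 else 1 - f p) =
      ∏' ℓ : {p : ℕ // p.Prime ∧ ¬ p ∣ M}, (1 - f ℓ) := by
    have hsupp : Function.mulSupport (fun p : Nat.Primes => if (p : ℕ) ∣ M then 1 else 1 - f p)
        ⊆ Set.range (fun q : {p : ℕ // p.Prime ∧ ¬ p ∣ M} => (⟨q.1, q.2.1⟩ : Nat.Primes)) := by
      intro p hp
      by_cases h : (p : ℕ) ∣ M
      · simp only [Function.mem_mulSupport, if_pos h, ne_eq, not_true_eq_false] at hp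
      · exact ⟨⟨p, p.prop, h⟩, rfl⟩
    exact (hinj.tprod_eq hsupp).symm.trans (tprod_congr fun q => if_neg q.2.2)
  -- sum of F
  have hsumF : ∑' n, F n = ∑ d ∈ M.divisors, μf d := by
    rw [tsum_eq_sum (s := M.divisors) ?_]
    · exact Finset.sum_congr rfl fun d hd =>
        if_pos (Nat.primeFactors_mono (Nat.mem_divisors.mp hd).1 hM)
    · intro n hn
      by_cases hsq : Squarefree n
      · by_cases hsub : n.primeFactors ⊆ M.primeFactors
        · exfalso
          apply hn
          rw [Nat.mem_divisors]
          refine ⟨?_, hM⟩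
          calc n = ∏ p ∈ n.primeFactors, p := (Nat.prod_primeFactors_of_squarefree hsq).symm
            _ ∣ ∏ p ∈ M.primeFactors, p := Finset.prod_dvd_prod_of_subset _ _ _ hsub
            _ ∣ M := Nat.prod_primeFactors_dvd M
        · exact if_neg hsub
      · have : ArithmeticFunction.moebius n = 0 :=
          ArithmeticFunction.moebius_eq_zero_of_not_squarefree hsq
        simp [hFdef, hμf, this]
  -- the convolution identity
  have hconv : ∀ n, (F ⍟ G) n = μf n := by
    intro n
    rcases eq_or_ne n 0 with rfl | hn
    · rw [LSeries.convolution_map_zero]; exact hμf0.symm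
    rw [LSeries.convolution_def]
    set S := n.primeFactors ∩ M.primeFactors with hS
    set a₀ := ∏ p ∈ S, p ^ n.factorization p with ha₀
    have hSprime : ∀ p ∈ S, p.Prime := fun p hp =>
      Nat.prime_of_mem_primeFactors (Finset.mem_inter.mp hp).1
    have ha0 : a₀ ≠ 0 :=
      Finset.prod_ne_zero_iff.mpr fun p hp => pow_ne_zero _ (hSprime p hp).ne_zero
    have hfacta : ∀ q, a₀.factorization q = if q ∈ S then n.factorization q else 0 := by
      intro q
      rw [ha₀, Nat.factorization_prod fun p hp => pow_ne_zero _ (hSprime p hp).ne_zero]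
      rw [Finsupp.finset_sum_apply]
      rw [Finset.sum_congr rfl fun p hp => by
        rw [Nat.Prime.factorization_pow (hSprime p hp), Finsupp.single_apply]]
      exact Finset.sum_ite_eq' S q _
    have hadvd : a₀ ∣ n := by
      rw [← Nat.factorization_le_iff_dvd ha0 hn]
      refine Finsupp.le_def.mpr fun q => ?_
      rw [hfacta q]
      split <;> simp
    set b₀ := n / a₀ with hb₀
    have hab : a₀ * b₀ = n := Nat.mul_div_cancel' hadvd
    have hb0 : b₀ ≠ 0 := by
      intro h
      rw [h, mul_zero] at hab
      exact hn hab.symm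
    have hfactb : ∀ q, b₀.factorization q = if q ∈ S then 0 else n.factorization q := by
      intro q
      rw [hb₀, Nat.factorization_div hadvd, Finsupp.tsub_apply, hfacta q]
      split <;> simp
    have hbdvd : b₀ ∣ n := Dvd.intro_left a₀ hab
    have hbcop : Nat.Coprime b₀ M := by
      by_contra hg
      obtain ⟨q, hq, hqd⟩ := Nat.exists_prime_and_dvd hg
      have hqb : q ∣ b₀ := hqd.trans (Nat.gcd_dvd_left _ _)
      have hqM : q ∣ M := hqd.trans (Nat.gcd_dvd_right _ _)
      have hqn : q ∣ n := hqb.trans hbdvd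
      have hqS : q ∈ S := Finset.mem_inter.mpr
        ⟨Nat.mem_primeFactors.mpr ⟨hq, hqn, hn⟩, Nat.mem_primeFactors.mpr ⟨hq, hqM, hM⟩⟩
      have h0 : b₀.factorization q = 0 := by rw [hfactb q, if_pos hqS]
      have hpos : b₀.factorization q ≠ 0 := by
        rw [← Finsupp.mem_support_iff, Nat.support_factorization]
        exact Nat.mem_primeFactors.mpr ⟨hq, hqb, hb0⟩
      exact hpos h0
    have haP : a₀.primeFactors ⊆ M.primeFactors := by
      intro q hq
      have hne : a₀.factorization q ≠ 0 := by
        rw [← Finsupp.mem_support_iff, Nat.support_factorization]; exact hq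
      rw [hfacta q] at hne
      by_cases hqS : q ∈ S
      · exact (Finset.mem_inter.mp hqS).2
      · exact absurd (if_neg hqS) hne
    have huniq : ∀ a b : ℕ, a * b = n → a.primeFactors ⊆ M.primeFactors →
        Nat.Coprime b M → a = a₀ := by
      intro a b habn hsub hcop
      have ha : a ≠ 0 := by
        rintro rfl
        rw [zero_mul] at habn
        exact hn habn.symm
      have hb : b ≠ 0 := by
        rintro rfl
        rw [mul_zero] at habn
        exact hn habn.symm
      refine Nat.eq_of_factorization_eq ha ha0 fun q => ?_
      rw [hfacta q]
      by_cases hqS : q ∈ S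
      · rw [if_pos hqS]
        obtain ⟨hqn, hqM⟩ := Finset.mem_inter.mp hqS
        have hq : q.Prime := Nat.prime_of_mem_primeFactors hqn
        have hbq : b.factorization q = 0 := by
          rw [Nat.factorization_eq_zero_iff]
          right; left
          intro hdvd
          have hq1 : q ∣ 1 := hcop ▸ Nat.dvd_gcd hdvd (Nat.dvd_of_mem_primeFactors hqM)
          exact hq.ne_one (Nat.dvd_one.mp hq1)
        have hnq : n.factorization q = a.factorization q + b.factorization q := by
          rw [← habn, Nat.factorization_mul ha hb, Finsupp.add_apply]
        omega
      · rw [if_neg hqS]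
        by_contra hne
        have hq' : q ∈ a.primeFactors := by
          rw [← Nat.support_factorization, Finsupp.mem_support_iff]
          exact hne
        have hqM : q ∈ M.primeFactors := hsub hq'
        have hqn : q ∈ n.primeFactors := Nat.primeFactors_mono ⟨b, habn.symm⟩ hn hq'
        exact hqS (Finset.mem_inter.mpr ⟨hqn, hqM⟩)
    have hmem : (a₀, b₀) ∈ n.divisorsAntidiagonal := by
      rw [Nat.mem_divisorsAntidiagonal]
      exact ⟨hab, hn⟩
    have hzero : ∀ p ∈ n.divisorsAntidiagonal, p ≠ (a₀, b₀) → F p.1 * G p.2 = 0 := by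
      rintro ⟨a, b⟩ hmem' hne
      rw [Nat.mem_divisorsAntidiagonal] at hmem'
      by_cases hFa : a.primeFactors ⊆ M.primeFactors
      · by_cases hGb : Nat.Coprime b M
        · exfalso
          apply hne
          have ha' : a = a₀ := huniq a b hmem'.1 hFa hGb
          have hbne : b = b₀ := by
            subst ha'
            have h' : a₀ * b = a₀ * b₀ := by rw [hab, hmem'.1]
            exact Nat.eq_of_mul_eq_mul_left (Nat.pos_of_ne_zero ha0) h'
          rw [ha', hbne]
        · simp only [hGdef, if_neg hGb, mul_zero]
      · simp only [hFdef, if_neg hFa, zero_mul]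
    have hval : F a₀ * G b₀ = μf n := by
      have hcop' : Nat.Coprime a₀ b₀ := by
        by_contra hg
        obtain ⟨q, hq, hqd⟩ := Nat.exists_prime_and_dvd hg
        have hqa : q ∣ a₀ := hqd.trans (Nat.gcd_dvd_left _ _)
        have hqb : q ∣ b₀ := hqd.trans (Nat.gcd_dvd_right _ _)
        have hqM : q ∣ M :=
          Nat.dvd_of_mem_primeFactors (haP (Nat.mem_primeFactors.mpr ⟨hq, hqa, ha0⟩))
        have hq1 : q ∣ 1 := hbcop ▸ Nat.dvd_gcd hqb hqM
        exact hq.ne_one (Nat.dvd_one.mp hq1)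
      have hμmul : (ArithmeticFunction.moebius (a₀ * b₀) : ℤ) =
          ArithmeticFunction.moebius a₀ * ArithmeticFunction.moebius b₀ :=
        ArithmeticFunction.isMultiplicative_moebius.map_mul_of_coprime hcop'
      have hfm : f (a₀ * b₀) = f a₀ * f b₀ := hmul a₀ b₀ (Nat.Coprime.mul hbcop.symm hcop')
      simp only [hFdef, hGdef, if_pos haP, if_pos hbcop, hμf, ← hab, hμmul, hfm]
      push_cast
      ring
    exact (Finset.sum_eq_single_of_mem (a₀, b₀) hmem hzero).trans hval
  -- final assembly
  have hFsummable : LSeriesSummable F 0 := by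
    unfold LSeriesSummable
    rw [term_at_zero' F hF0]
    exact hFsum.of_norm
  have hGsummable : LSeriesSummable G 0 := by
    unfold LSeriesSummable
    rw [term_at_zero' G hG0]
    exact hGsum.of_norm
  calc ∑' d : ℕ, μf d = LSeries μf 0 := (LSeries_at_zero' μf hμf0).symm
    _ = LSeries (F ⍟ G) 0 := by rw [funext hconv]
    _ = LSeries F 0 * LSeries G 0 := LSeries_convolution' hFsummable hGsummable
    _ = (∑' n, F n) * (∑' n, G n) := by rw [LSeries_at_zero' F hF0, LSeries_at_zero' G hG0]
    _ = _ := by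
      rw [hsumF]
      congr 1
      exact hEuler.symm.trans ((tprod_congr hfactor).trans hprod)
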